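/- Let x ∉ D and let n ≥ 1 be such that g_n'(x) = −1. Then μ({y : 0 < |x − y| < 2^{−n} and (T(y) − T(x))/(y − x) ≥ G_{n−1}'(x) − 2/5}) ≥ 2^{−(n+5)}, where μ denotes Lebesgue measure on ℝ and G_{n−1}'(x) = g_1'(x) + ⋯ + g_{n−1}'(x) (with G_0'(x) = 0). -/

import Mathlib

open MeasureTheory Filter Set

noncomputable section

/-- The set of dyadic numbers of level `n`: `{k / 2^n : k ∈ ℤ}`. -/
def Dset (n : ℕ) : Set ℝ := {y : ℝ | ∃ k : ℤ, y = (k : ℝ) / 2 ^ n}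

/-- The set of all dyadic numbers. -/
def Ddyadic : Set ℝ := ⋃ n, Dset n

/-- `g k x = dist(x, D_k)`. -/
def g (k : ℕ) (x : ℝ) : ℝ := Metric.infDist x (Dset k)

/-- The Takagi function `T x = ∑_{k=1}^∞ g_k(x)`. -/
def T (x : ℝ) : ℝ := ∑' k : ℕ, g (k + 1) x

/-- `G' n x = g_1'(x) + ⋯ + g_n'(x)` (so `G' 0 x = 0`). -/
def G' (n : ℕ) (x : ℝ) : ℝ := ∑ k ∈ Finset.range n, deriv (g (k + 1)) x

/-- `f` is approximately derivable at `x` with approximate derivative `L`: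
for every `ε > 0`, the relative measure of the set of points `y` in `(x - r, x + r)`,
`y ≠ x`, where `|(f y - f x - L (y - x)) / (y - x)| ≥ ε`, divided by `2r`,
tends to `0` as `r → 0⁺`. -/
def ApproxDerivAt (f : ℝ → ℝ) (x L : ℝ) : Prop :=
  ∀ ε > (0 : ℝ), Tendsto
    (fun r : ℝ => volume (Ioo (x - r) (x + r) ∩
        {y : ℝ | y ≠ x ∧ ε ≤ |(f y - f x - L * (y - x)) / (y - x)|}) /
      ENNReal.ofReal (2 * r))
    (nhdsWithin 0 (Ioi 0)) (nhds 0)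

/- ### Auxiliary lemmas -/

lemma mem_Dset (j : ℕ) (k : ℤ) : ((k : ℝ) / 2 ^ j) ∈ Dset j := ⟨k, rfl⟩

lemma Dset_nonempty (j : ℕ) : (Dset j).Nonempty := ⟨0, 0, by simp⟩

lemma g_nonneg (j : ℕ) (y : ℝ) : 0 ≤ g j y := Metric.infDist_nonneg

lemma g_le (j : ℕ) (y : ℝ) (k : ℤ) : g j y ≤ |y - k / 2 ^ j| := by
  simpa [g, Real.dist_eq] using Metric.infDist_le_dist_of_mem (mem_Dset j k)

lemma le_g (j : ℕ) (y c : ℝ) (h : ∀ k : ℤ, c ≤ |y - k / 2 ^ j|) : c ≤ g j y := by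
  by_contra h'
  push_neg at h'
  obtain ⟨z, ⟨k, rfl⟩, hz⟩ := (Metric.infDist_lt_iff (Dset_nonempty j)).1 h'
  rw [Real.dist_eq] at hz
  exact absurd (h k) (by linarith)

lemma g_eq_left (j : ℕ) (k : ℤ) (y : ℝ) (h1 : (k : ℝ) / 2 ^ j ≤ y)
    (h2 : y ≤ k / 2 ^ j + 1 / (2 * 2 ^ j)) : g j y = y - k / 2 ^ j := by
  have hp : (0 : ℝ) < 2 ^ j := by positivity
  refine le_antisymm ?_ (le_g _ _ _ ?_)
  · have := g_le j y k
    rwa [abs_of_nonneg (by linarith)] at this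
  · intro l
    rcases le_or_gt l k with h | h
    · have hlk : (l : ℝ) / 2 ^ j ≤ k / 2 ^ j := by
        gcongr
      calc y - k / 2 ^ j ≤ y - l / 2 ^ j := by linarith
        _ ≤ |y - l / 2 ^ j| := le_abs_self _
    · have hkl : ((k : ℝ) + 1) ≤ (l : ℝ) := by exact_mod_cast h
      have hlk : ((k : ℝ) + 1) / 2 ^ j ≤ (l : ℝ) / 2 ^ j := by gcongr
      have h3 : y - k / 2 ^ j ≤ (l : ℝ) / 2 ^ j - y := by
        have hsplit : ((k : ℝ) + 1) / 2 ^ j = k / 2 ^ j + 1 / 2 ^ j := by ring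
        have h4 : 1 / (2 * 2 ^ j) + 1 / (2 * 2 ^ j) = 1 / (2 : ℝ) ^ j := by
          field_simp
          norm_num
        linarith
      calc y - k / 2 ^ j ≤ (l : ℝ) / 2 ^ j - y := h3
        _ ≤ |y - l / 2 ^ j| := by rw [abs_sub_comm]; exact le_abs_self _

lemma g_eq_right (j : ℕ) (k : ℤ) (y : ℝ) (h1 : (k : ℝ) / 2 ^ j - 1 / (2 * 2 ^ j) ≤ y)
    (h2 : y ≤ k / 2 ^ j) : g j y = k / 2 ^ j - y := by
  have hp : (0 : ℝ) < 2 ^ j := by positivity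
  refine le_antisymm ?_ (le_g _ _ _ ?_)
  · have := g_le j y k
    rwa [abs_sub_comm, abs_of_nonneg (by linarith)] at this
  · intro l
    rcases le_or_gt k l with h | h
    · have hlk : (k : ℝ) / 2 ^ j ≤ (l : ℝ) / 2 ^ j := by
        gcongr
      calc k / 2 ^ j - y ≤ (l : ℝ) / 2 ^ j - y := by linarith
        _ ≤ |y - l / 2 ^ j| := by rw [abs_sub_comm]; exact le_abs_self _
    · have hkl : (l : ℝ) + 1 ≤ (k : ℝ) := by exact_mod_cast h
      have hlk : ((l : ℝ) + 1) / 2 ^ j ≤ (k : ℝ) / 2 ^ j := by gcongr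
      have h3 : k / 2 ^ j - y ≤ y - (l : ℝ) / 2 ^ j := by
        have hsplit : ((l : ℝ) + 1) / 2 ^ j = l / 2 ^ j + 1 / 2 ^ j := by ring
        have h4 : 1 / (2 * 2 ^ j) + 1 / (2 * 2 ^ j) = 1 / (2 : ℝ) ^ j := by
          field_simp
          norm_num
        linarith
      calc k / 2 ^ j - y ≤ y - (l : ℝ) / 2 ^ j := h3
        _ ≤ |y - l / 2 ^ j| := le_abs_self _

lemma g_pair (j : ℕ) (y : ℝ) : g j y + g (j + 1) y ≤ ((2 : ℝ) ^ (j + 1))⁻¹ := by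
  have hp : (0 : ℝ) < 2 ^ (j + 1) := by positivity
  have hpj : (0 : ℝ) < 2 ^ j := by positivity
  set k : ℤ := ⌊(2 : ℝ) ^ (j + 1) * y⌋ with hk
  have hk1 : (k : ℝ) ≤ 2 ^ (j + 1) * y := Int.floor_le _
  have hk2 : (2 : ℝ) ^ (j + 1) * y < k + 1 := Int.lt_floor_add_one _
  have hu1n : 0 ≤ y - (k : ℝ) / 2 ^ (j + 1) := by
    rw [sub_nonneg, div_le_iff₀ hp]; linarith
  have hu2n : 0 ≤ ((k : ℝ) + 1) / 2 ^ (j + 1) - y := by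
    rw [sub_nonneg, le_div_iff₀ hp]; linarith
  have hsum : (y - (k : ℝ) / 2 ^ (j + 1)) + (((k : ℝ) + 1) / 2 ^ (j + 1) - y)
      = ((2 : ℝ) ^ (j + 1))⁻¹ := by
    field_simp
    ring
  have hg1a : g (j + 1) y ≤ y - (k : ℝ) / 2 ^ (j + 1) := by
    have := g_le (j + 1) y k
    rwa [abs_of_nonneg hu1n] at this
  have hg1b : g (j + 1) y ≤ ((k : ℝ) + 1) / 2 ^ (j + 1) - y := by
    have h := g_le (j + 1) y (k + 1)
    have hc : ((k + 1 : ℤ) : ℝ) = (k : ℝ) + 1 := by push_cast; ring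
    rw [hc, abs_sub_comm, abs_of_nonneg hu2n] at h
    exact h
  rcases Int.even_or_odd k with ⟨l, hl⟩ | ⟨l, hl⟩
  · have heq : ((l : ℝ)) / 2 ^ j = (k : ℝ) / 2 ^ (j + 1) := by
      rw [hl]; push_cast
      rw [div_eq_div_iff (ne_of_gt hpj) (ne_of_gt hp)]
      ring
    have hgj : g j y ≤ y - (k : ℝ) / 2 ^ (j + 1) := by
      have h := g_le j y l
      rw [heq] at h
      rwa [abs_of_nonneg hu1n] at h
    linarith
  · have heq : ((l : ℝ) + 1) / 2 ^ j = ((k : ℝ) + 1) / 2 ^ (j + 1) := by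
      rw [hl]; push_cast
      rw [div_eq_div_iff (ne_of_gt hpj) (ne_of_gt hp)]
      ring
    have hgj : g j y ≤ ((k : ℝ) + 1) / 2 ^ (j + 1) - y := by
      have h := g_le j y (l + 1)
      have hc : ((l + 1 : ℤ) : ℝ) = (l : ℝ) + 1 := by push_cast; ring
      rw [hc, heq, abs_sub_comm, abs_of_nonneg hu2n] at h
      exact h
    linarith

lemma g_le_pow (j : ℕ) (y : ℝ) : g j y ≤ (1 / 2 : ℝ) ^ j := by
  have hp : (0 : ℝ) < 2 ^ j := by positivity
  set k : ℤ := ⌊(2 : ℝ) ^ j * y⌋ with hk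
  have hk1 : (k : ℝ) ≤ 2 ^ j * y := Int.floor_le _
  have hk2 : (2 : ℝ) ^ j * y < k + 1 := Int.lt_floor_add_one _
  have hu1n : 0 ≤ y - (k : ℝ) / 2 ^ j := by
    rw [sub_nonneg, div_le_iff₀ hp]; linarith
  have hu2n : 0 ≤ ((k : ℝ) + 1) / 2 ^ j - y := by
    rw [sub_nonneg, le_div_iff₀ hp]; linarith
  have hsum : (y - (k : ℝ) / 2 ^ j) + (((k : ℝ) + 1) / 2 ^ j - y) = ((2 : ℝ) ^ j)⁻¹ := by
    field_simp
    ring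
  have hg1a : g j y ≤ y - (k : ℝ) / 2 ^ j := by
    have := g_le j y k
    rwa [abs_of_nonneg hu1n] at this
  have heq : ((1 : ℝ) / 2) ^ j = ((2 : ℝ) ^ j)⁻¹ := by
    rw [div_pow, one_pow, one_div]
  rw [heq]
  linarith

lemma summable_g' (y : ℝ) (M : ℕ) : Summable (fun k : ℕ => g (k + M) y) := by
  apply Summable.of_nonneg_of_le (fun k => g_nonneg _ _) (fun k => g_le_pow (k + M) y)
  apply Summable.of_nonneg_of_le (fun k => by positivity) (fun k => ?_)
    (summable_geometric_of_lt_one (r := (1 / 2 : ℝ)) (by norm_num) (by norm_num))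
  exact pow_le_pow_of_le_one (by norm_num) (by norm_num) (by omega)

lemma summable_g (y : ℝ) : Summable (fun k : ℕ => g (k + 1) y) := summable_g' y 1

lemma tau_le (M : ℕ) (y : ℝ) : (∑' k : ℕ, g (k + M + 1) y) ≤ 1 / (3 * 2 ^ M) := by
  have hs : Summable (fun k : ℕ => g (k + M + 1) y) := by
    simpa [add_assoc] using summable_g' y (M + 1)
  have hinj2 : Function.Injective (fun i : ℕ => 2 * i) := fun a b h => by
    dsimp only at h; omega
  have hinj2' : Function.Injective (fun i : ℕ => 2 * i + 1) := fun a b h => by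
    dsimp only at h; omega
  have hse : Summable (fun i : ℕ => g (2 * i + M + 1) y) := by
    have := hs.comp_injective hinj2
    exact this
  have hso : Summable (fun i : ℕ => g (2 * i + 1 + M + 1) y) := by
    have := hs.comp_injective hinj2'
    exact this
  have hgeo : Summable (fun i : ℕ => ((2 : ℝ) ^ (M + 2))⁻¹ * (1 / 4) ^ i) :=
    (summable_geometric_of_lt_one (r := (1 / 4 : ℝ)) (by norm_num) (by norm_num)).mul_left _
  have hbound : ∀ i : ℕ, g (2 * i + M + 1) y + g (2 * i + 1 + M + 1) y
      ≤ ((2 : ℝ) ^ (M + 2))⁻¹ * (1 / 4) ^ i := by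
    intro i
    have h1 := g_pair (2 * i + M + 1) y
    have he : 2 * i + 1 + M + 1 = (2 * i + M + 1) + 1 := by omega
    rw [he]
    have h2 : ((2 : ℝ) ^ (2 * i + M + 1 + 1))⁻¹ = ((2 : ℝ) ^ (M + 2))⁻¹ * (1 / 4) ^ i := by
      rw [show 2 * i + M + 1 + 1 = (M + 2) + 2 * i from by omega, pow_add, pow_mul]
      rw [mul_inv]
      congr 1
      rw [show ((2:ℝ)^2) = 4 from by norm_num, one_div, inv_pow]
    linarith
  have hsplit : (∑' k : ℕ, g (k + M + 1) y)
      = (∑' i : ℕ, g (2 * i + M + 1) y) + ∑' i : ℕ, g (2 * i + 1 + M + 1) y := by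
    rw [← tsum_even_add_odd (by simpa using hse) (by simpa using hso)]
  rw [hsplit, ← hse.tsum_add hso]
  calc (∑' i : ℕ, (g (2 * i + M + 1) y + g (2 * i + 1 + M + 1) y))
      ≤ ∑' i : ℕ, ((2 : ℝ) ^ (M + 2))⁻¹ * (1 / 4) ^ i :=
        (hse.add hso).tsum_le_tsum hbound hgeo
    _ = ((2 : ℝ) ^ (M + 2))⁻¹ * (1 - 1 / 4)⁻¹ := by
        rw [tsum_mul_left, tsum_geometric_of_lt_one (by norm_num) (by norm_num)]
    _ = 1 / (3 * 2 ^ M) := by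
        rw [pow_add]
        have hpM : (0:ℝ) < 2 ^ M := by positivity
        field_simp
        ring

lemma deriv_affine_on {f : ℝ → ℝ} {x σ c lo hi : ℝ} (hlo : lo < x) (hhi : x < hi)
    (h : ∀ y, lo < y → y < hi → f y = σ * y + c) : deriv f x = σ := by
  have hev : f =ᶠ[nhds x] (fun y => σ * y + c) := by
    filter_upwards [Ioo_mem_nhds hlo hhi] with y hy
    exact h y hy.1 hy.2
  rw [hev.deriv_eq]
  have hd : HasDerivAt (fun y => σ * y + c) σ x := by
    simpa using ((hasDerivAt_id x).const_mul σ).add_const c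
  exact hd.deriv

theorem takagi_upper_slope_measure (x : ℝ) (hx : x ∉ Ddyadic)
    (n : ℕ) (hn : 1 ≤ n) (hg : deriv (g n) x = -1) :
    ENNReal.ofReal (((2 : ℝ) ^ (n + 5))⁻¹) ≤
      volume {y : ℝ | 0 < |x - y| ∧ |x - y| < ((2 : ℝ) ^ n)⁻¹ ∧
        G' (n - 1) x - 2 / 5 ≤ (T y - T x) / (y - x)} := by
  obtain ⟨N, rfl⟩ : ∃ N, n = N + 1 := ⟨n - 1, (Nat.succ_pred_eq_of_pos hn).symm⟩
  have hx' : ∀ j : ℕ, x ∉ Dset j := fun j hj => hx (Set.mem_iUnion.2 ⟨j, hj⟩)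
  have hpn : (0 : ℝ) < 2 ^ (N + 1) := by positivity
  set r : ℝ := ((2 : ℝ) ^ (N + 1))⁻¹ with hrdef
  have hr : 0 < r := by positivity
  set K : ℤ := ⌊(2 : ℝ) ^ (N + 1) * x⌋ with hK
  set a : ℝ := (K : ℝ) / 2 ^ (N + 1) with hadef
  have ha0 : a ≤ x := by
    rw [hadef, div_le_iff₀ hpn]
    have := Int.floor_le ((2 : ℝ) ^ (N + 1) * x)
    linarith [this]
  have ha : a < x := by
    rcases eq_or_lt_of_le ha0 with h | h
    · exact absurd (⟨K, by rw [← h, hadef]⟩ : x ∈ Dset (N + 1)) (hx' (N + 1))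
    · exact h
  have hb : x < a + r := by
    have h1 : (2 : ℝ) ^ (N + 1) * x < (K : ℝ) + 1 := Int.lt_floor_add_one _
    have h2 : x < ((K : ℝ) + 1) / 2 ^ (N + 1) := by
      rw [lt_div_iff₀ hpn]; linarith
    have heq : ((K : ℝ) + 1) / 2 ^ (N + 1) = a + r := by
      rw [hadef, hrdef]; field_simp
    linarith
  set m : ℝ := a + r / 2 with hmdef
  have hmD : m ∈ Dset (N + 2) := by
    refine ⟨2 * K + 1, ?_⟩
    have h2 : ((2 * K + 1 : ℤ) : ℝ) = 2 * (K : ℝ) + 1 := by push_cast; ring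
    rw [hmdef, hadef, hrdef, h2, show (2:ℝ) ^ (N + 2) = 2 ^ (N + 1) * 2 from by
      rw [pow_succ]]
    field_simp
  have hma : (K : ℝ) / 2 ^ (N + 1) + 1 / (2 * 2 ^ (N + 1)) = m := by
    have h3 : 1 / (2 * (2:ℝ) ^ (N + 1)) = ((2:ℝ) ^ (N + 1))⁻¹ / 2 := by
      rw [one_div, mul_inv]
      ring
    rw [hmdef, hadef, hrdef, h3]
  have hgy : ∀ y, a ≤ y → y ≤ m → g (N + 1) y = y - a := by
    intro y hy1 hy2
    rw [hadef]
    apply g_eq_left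
    · rw [← hadef]; exact hy1
    · rw [hma]; exact hy2
  have hxm : m < x := by
    have hne : x ≠ m := fun h => hx' (N + 2) (by rw [h]; exact hmD)
    rcases lt_or_gt_of_ne hne with h | h
    · exfalso
      have hder : deriv (g (N + 1)) x = 1 := by
        apply deriv_affine_on (σ := (1 : ℝ)) (c := -a) ha h
        intro z hz1 hz2
        rw [hgy z hz1.le hz2.le]; ring
      rw [hg] at hder
      norm_num at hder
    · exact h
  have hgx : g (N + 1) x = a + r - x := by
    have heq : ((K : ℝ) + 1) / 2 ^ (N + 1) = a + r := by
      rw [hadef, hrdef]; field_simp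
    have hcast : ((K + 1 : ℤ) : ℝ) = (K : ℝ) + 1 := by push_cast; ring
    have h1 : ((K + 1 : ℤ) : ℝ) / 2 ^ (N + 1) - 1 / (2 * 2 ^ (N + 1)) ≤ x := by
      rw [hcast]
      have : ((K : ℝ) + 1) / 2 ^ (N + 1) - 1 / (2 * 2 ^ (N + 1)) = m := by
        rw [hmdef, hadef, hrdef]
        field_simp
        ring
      rw [this]; exact hxm.le
    have h2 : x ≤ ((K + 1 : ℤ) : ℝ) / 2 ^ (N + 1) := by
      rw [hcast, heq]; exact hb.le
    have := g_eq_right (N + 1) (K + 1) x h1 h2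
    rw [this, hcast, heq]
  -- affine behaviour of g i on [a, a+r] for i ≤ N
  have affine : ∀ i : ℕ, i ≤ N → ∀ y, a ≤ y → y ≤ a + r →
      g i y = g i x + (deriv (g i) x) * (y - x) := by
    intro i hi
    have hpi : (0 : ℝ) < 2 ^ (i + 1) := by positivity
    set c : ℤ := ⌊(2 : ℝ) ^ (i + 1) * a⌋ with hc
    have hca : (c : ℝ) / 2 ^ (i + 1) ≤ a := by
      rw [div_le_iff₀ hpi]
      have := Int.floor_le ((2 : ℝ) ^ (i + 1) * a)
      linarith
    have hpow : (2 : ℝ) ^ (N - i) * 2 ^ (i + 1) = 2 ^ (N + 1) := by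
      rw [← pow_add]; congr 1; omega
    have hcb : a + r ≤ ((c : ℝ) + 1) / 2 ^ (i + 1) := by
      have h1 : (2 : ℝ) ^ (i + 1) * a < (c : ℝ) + 1 := Int.lt_floor_add_one _
      have hpow' : (2 : ℝ) ^ (i + 1) * 2 ^ (N - i) = 2 ^ (N + 1) := by
        rw [mul_comm]; exact hpow
      have haK : (2 : ℝ) ^ (i + 1) * a * 2 ^ (N - i) = (K : ℝ) := by
        have hstep : (2 : ℝ) ^ (i + 1) * ((K : ℝ) / 2 ^ (N + 1)) * 2 ^ (N - i)
            = (K : ℝ) * (2 ^ (i + 1) * 2 ^ (N - i)) / 2 ^ (N + 1) := by ring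
        rw [hadef, hstep, hpow', mul_div_cancel_right₀ _ (ne_of_gt hpn)]
      have hposNi : (0 : ℝ) < 2 ^ (N - i) := by positivity
      have h2 : (K : ℝ) < ((c : ℝ) + 1) * 2 ^ (N - i) := by
        rw [← haK]
        have := mul_lt_mul_of_pos_right h1 hposNi
        linarith
      have h3 : K < (c + 1) * 2 ^ (N - i) := by
        have : (K : ℝ) < (((c + 1) * 2 ^ (N - i) : ℤ) : ℝ) := by push_cast; linarith
        exact_mod_cast this
      have h4 : (K : ℤ) + 1 ≤ (c + 1) * 2 ^ (N - i) := h3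
      have h5 : (K : ℝ) + 1 ≤ ((c : ℝ) + 1) * 2 ^ (N - i) := by
        have : ((K + 1 : ℤ) : ℝ) ≤ (((c + 1) * 2 ^ (N - i) : ℤ) : ℝ) := by exact_mod_cast h4
        push_cast at this
        linarith
      have heq : a + r = ((K : ℝ) + 1) / 2 ^ (N + 1) := by
        rw [hadef, hrdef]; field_simp
      rw [heq, div_le_div_iff₀ hpn hpi]
      calc ((K : ℝ) + 1) * 2 ^ (i + 1) ≤ ((c : ℝ) + 1) * 2 ^ (N - i) * 2 ^ (i + 1) := by
            nlinarith
        _ = ((c : ℝ) + 1) * 2 ^ (N + 1) := by rw [mul_assoc, hpow]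
    intro y hy1 hy2
    have hpi' : (0 : ℝ) < 2 ^ i := by positivity
    rcases Int.even_or_odd c with ⟨l, hl⟩ | ⟨l, hl⟩
    · have heq2 : (l : ℝ) / 2 ^ i = (c : ℝ) / 2 ^ (i + 1) := by
        rw [hl]; push_cast
        rw [div_eq_div_iff (ne_of_gt hpi') (ne_of_gt hpi), pow_succ]
        ring
      have key : ∀ z, a ≤ z → z ≤ a + r → g i z = z - (l : ℝ) / 2 ^ i := by
        intro z hz1 hz2
        apply g_eq_left
        · rw [heq2]; linarith
        · have hps : (2 : ℝ) * 2 ^ i = 2 ^ (i + 1) := by rw [pow_succ]; ring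
          have h6 : (l : ℝ) / 2 ^ i + 1 / (2 * 2 ^ i) = ((c : ℝ) + 1) / 2 ^ (i + 1) := by
            rw [heq2, hps, ← add_div]
          rw [h6]; linarith
      have hder : deriv (g i) x = 1 := by
        apply deriv_affine_on (σ := (1 : ℝ)) (c := -((l : ℝ) / 2 ^ i)) ha hb
        intro z hz1 hz2
        rw [key z hz1.le hz2.le]; ring
      rw [key y hy1 hy2, key x ha.le hb.le, hder]; ring
    · have heq2 : ((l : ℝ) + 1) / 2 ^ i = ((c : ℝ) + 1) / 2 ^ (i + 1) := by
        rw [hl]; push_cast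
        rw [div_eq_div_iff (ne_of_gt hpi') (ne_of_gt hpi), pow_succ]
        ring
      have key : ∀ z, a ≤ z → z ≤ a + r → g i z = ((l : ℝ) + 1) / 2 ^ i - z := by
        intro z hz1 hz2
        have hcast : ((l + 1 : ℤ) : ℝ) = (l : ℝ) + 1 := by push_cast; ring
        have := g_eq_right i (l + 1) z ?_ ?_
        · rw [this, hcast]
        · rw [hcast]
          have hps : (2 : ℝ) * 2 ^ i = 2 ^ (i + 1) := by rw [pow_succ]; ring
          have h6 : ((l : ℝ) + 1) / 2 ^ i - 1 / (2 * 2 ^ i) = (c : ℝ) / 2 ^ (i + 1) := by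
            rw [heq2, hps, div_sub_div_same]
            congr 1
            ring
          rw [h6]; linarith
        · rw [hcast, heq2]; linarith
      have hder : deriv (g i) x = -1 := by
        apply deriv_affine_on (σ := (-1 : ℝ)) (c := ((l : ℝ) + 1) / 2 ^ i) ha hb
        intro z hz1 hz2
        rw [key z hz1.le hz2.le]; ring
      rw [key y hy1 hy2, key x ha.le hb.le, hder]; ring
  have hG : ∀ y, a ≤ y → y ≤ a + r →
      (∑ j ∈ Finset.range N, g (j + 1) y) - (∑ j ∈ Finset.range N, g (j + 1) x)
        = G' N x * (y - x) := by
    intro y hy1 hy2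
    rw [← Finset.sum_sub_distrib, G', Finset.sum_mul]
    apply Finset.sum_congr rfl
    intro j hj
    have hj' : j + 1 ≤ N := Nat.succ_le_of_lt (Finset.mem_range.1 hj)
    have := affine (j + 1) hj' y hy1 hy2
    linarith
  have hT : ∀ y, T y = (∑ j ∈ Finset.range (N + 1), g (j + 1) y)
      + ∑' k : ℕ, g (k + (N + 1) + 1) y := by
    intro y
    rw [T, ← (summable_g y).sum_add_tsum_nat_add (N + 1)]
  have hτ_nonneg : ∀ y : ℝ, 0 ≤ ∑' k : ℕ, g (k + (N + 1) + 1) y :=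
    fun y => tsum_nonneg (fun k => g_nonneg _ _)
  have hτ_le : ∀ y : ℝ, (∑' k : ℕ, g (k + (N + 1) + 1) y) ≤ r / 3 := by
    intro y
    have h1 := tau_le (N + 1) y
    have h2 : 1 / (3 * (2 : ℝ) ^ (N + 1)) = r / 3 := by
      rw [hrdef]
      field_simp
    linarith
  -- the subset
  have hsub : Ioo a (a + r / 25) ⊆ {y : ℝ | 0 < |x - y| ∧ |x - y| < ((2 : ℝ) ^ (N + 1))⁻¹ ∧
      G' (N + 1 - 1) x - 2 / 5 ≤ (T y - T x) / (y - x)} := by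
    rintro y ⟨hy1, hy2⟩
    have hy2' : y < m := by rw [hmdef]; linarith
    have hym : m - y > (23 / 50) * r := by rw [hmdef]; linarith
    have hgyv : g (N + 1) y = y - a := hgy y hy1.le hy2'.le
    have hxy : 0 < x - y := by linarith
    refine ⟨?_, ?_, ?_⟩
    · rw [abs_of_pos hxy]; exact hxy
    · rw [abs_of_pos hxy, ← hrdef]; linarith
    · have hyx : y - x < 0 := by linarith
      have hNN : N + 1 - 1 = N := rfl
      rw [hNN, le_div_iff_of_neg hyx]
      have hTd : T y - T x = G' N x * (y - x) + (g (N + 1) y - g (N + 1) x)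
          + ((∑' k : ℕ, g (k + (N + 1) + 1) y) - ∑' k : ℕ, g (k + (N + 1) + 1) x) := by
        rw [hT y, hT x, Finset.sum_range_succ, Finset.sum_range_succ]
        have := hG y hy1.le (by linarith)
        linarith
      rw [hgyv, hgx] at hTd
      have h1 := hτ_le y
      have h2 := hτ_nonneg x
      have hexp : (G' N x - 2 / 5) * (y - x) = G' N x * (y - x) - (2 / 5) * (y - x) := by
        ring
      rw [hTd, hexp]
      have hmv : m = a + r / 2 := hmdef
      linarith [h1, h2, hb, hym, hmv]
  calc ENNReal.ofReal (((2 : ℝ) ^ (N + 1 + 5))⁻¹)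
      ≤ ENNReal.ofReal (r / 25) := by
        apply ENNReal.ofReal_le_ofReal
        have h32 : ((2 : ℝ) ^ (N + 1 + 5))⁻¹ = r / 32 := by
          rw [hrdef, pow_add, mul_inv, div_eq_mul_inv]
          norm_num
        rw [h32]
        linarith [hr]
    _ = volume (Ioo a (a + r / 25)) := by
        rw [Real.volume_Ioo]
        congr 1
        ring
    _ ≤ _ := measure_mono hsub
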